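/- arXiv:2106.02911 — 3 statements merged into one kernel-verified Lean document; each statement's English description precedes it below -/
import Mathlib

section
/- Let a > 0 and let u ∈ H^2((0,a)) with u'(0) = u'(a) = 0. Denote by ū = (1/a)∫₀ᵃ u dx its mean. Then there exists a constant C_a > 0 depending only on a such that ∫₀ᵃ [ (u')² − (u − ū)² ] dx ≤ C_a ∫₀ᵃ ( u'' + u − ū )² dx. -/
open Real Set MeasureTheory intervalIntegral

namespace Stmt0Aux

lemma mem_nhdsWithin_Ici_Icc {a x : ℝ} (hx : x ∈ Ico (0:ℝ) a) :
    Icc (0:ℝ) a ∈ nhdsWithin x (Ici x) :=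
  mem_nhdsWithin.2 ⟨Iio a, isOpen_Iio, hx.2,
    fun _ hy => ⟨le_trans hx.1 hy.2, le_of_lt hy.1⟩⟩

end Stmt0Aux

set_option maxHeartbeats 2000000 in
/-- Lojasiewicz–Simon type inequality: for a > 0 there is C_a > 0 (depending only on a)
such that for every H² (here C²) function u on [0,a] with Neumann boundary conditions,
∫ [(u')² − (u−ū)²] ≤ C_a ∫ (u'' + u − ū)². -/
theorem stmt0 (a : ℝ) (ha : 0 < a) :
    ∃ C : ℝ, 0 < C ∧ ∀ u u' u'' : ℝ → ℝ,
      (∀ x ∈ Icc (0:ℝ) a, HasDerivWithinAt u (u' x) (Icc 0 a) x) →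
      (∀ x ∈ Icc (0:ℝ) a, HasDerivWithinAt u' (u'' x) (Icc 0 a) x) →
      ContinuousOn u'' (Icc 0 a) →
      u' 0 = 0 → u' a = 0 →
      (∫ x in (0:ℝ)..a, ((u' x)^2 - (u x - (1/a) * ∫ y in (0:ℝ)..a, u y)^2)) ≤
        C * ∫ x in (0:ℝ)..a, (u'' x + u x - (1/a) * ∫ y in (0:ℝ)..a, u y)^2 := by
  classical
  set s : ℝ := if Real.sin a = 0 then 1 else |Real.sin a| with hsdef
  have hs0 : 0 < s := by
    rw [hsdef]; split
    · norm_num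
    · exact abs_pos.2 ‹_›
  refine ⟨2*a + 1 + 2*a/s, by positivity, ?_⟩
  intro u u' u'' hu hu' hu'' hb0 hba
  set m : ℝ := (1/a) * ∫ y in (0:ℝ)..a, u y with hmdef
  set v : ℝ → ℝ := fun x => u x - m with hvdef
  set f : ℝ → ℝ := fun x => u'' x + v x with hfdef
  have hIcc : uIcc (0:ℝ) a = Icc 0 a := uIcc_of_le ha.le
  have hcu : ContinuousOn u (Icc 0 a) := fun x hx => (hu x hx).continuousWithinAt
  have hcu' : ContinuousOn u' (Icc 0 a) := fun x hx => (hu' x hx).continuousWithinAt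
  have hcv : ContinuousOn v (Icc 0 a) := hcu.sub continuousOn_const
  have hcf : ContinuousOn f (Icc 0 a) := hu''.add hcv
  -- continuous extension of f
  set F : ℝ → ℝ := fun x => f (max 0 (min a x)) with hFdef
  have hclamp : ∀ x : ℝ, max 0 (min a x) ∈ Icc (0:ℝ) a :=
    fun x => ⟨le_max_left _ _, max_le ha.le (min_le_left _ _)⟩
  have hF : Continuous F := by
    rw [hFdef]
    exact hcf.comp_continuous
      (continuous_const.max (continuous_const.min continuous_id)) hclamp
  have hFf : ∀ x ∈ Icc (0:ℝ) a, F x = f x := by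
    intro x hx
    rw [hFdef]
    simp only
    rw [min_eq_right hx.2, max_eq_right hx.1]
  -- the auxiliary integrals
  set A : ℝ → ℝ := fun x => ∫ t in (0:ℝ)..x, Real.cos t * F t with hAdef
  set B : ℝ → ℝ := fun x => ∫ t in (0:ℝ)..x, Real.sin t * F t with hBdef
  have hcosF : Continuous fun t => Real.cos t * F t := Real.continuous_cos.mul hF
  have hsinF : Continuous fun t => Real.sin t * F t := Real.continuous_sin.mul hF
  have hdA : ∀ x, HasDerivAt A (Real.cos x * F x) x :=
    fun x => (hcosF.integral_hasStrictDerivAt 0 x).hasDerivAt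
  have hdB : ∀ x, HasDerivAt B (Real.sin x * F x) x :=
    fun x => (hsinF.integral_hasStrictDerivAt 0 x).hasDerivAt
  have hcA : Continuous A := continuous_iff_continuousAt.2 fun x => (hdA x).continuousAt
  have hcB : Continuous B := continuous_iff_continuousAt.2 fun x => (hdB x).continuousAt
  -- the solution w of w'' + w = F with w(0) = v 0, w'(0) = 0
  set w : ℝ → ℝ := fun x => v 0 * Real.cos x + Real.sin x * A x - Real.cos x * B x with hwdef
  set w' : ℝ → ℝ := fun x => -(v 0) * Real.sin x + Real.cos x * A x + Real.sin x * B x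
    with hw'def
  have hdw : ∀ x, HasDerivAt w (w' x) x := by
    intro x
    have h1 : HasDerivAt (fun y => v 0 * Real.cos y) (v 0 * (-Real.sin x)) x :=
      (Real.hasDerivAt_cos x).const_mul (v 0)
    have h2 : HasDerivAt (fun y => Real.sin y * A y)
        (Real.cos x * A x + Real.sin x * (Real.cos x * F x)) x :=
      (Real.hasDerivAt_sin x).mul (hdA x)
    have h3 : HasDerivAt (fun y => Real.cos y * B y)
        (-Real.sin x * B x + Real.cos x * (Real.sin x * F x)) x :=
      (Real.hasDerivAt_cos x).mul (hdB x)
    have h4 := (h1.add h2).sub h3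
    convert h4 using 1
    · rfl
    · rfl
    · rfl
    rw [hw'def]; ring
  have hdw' : ∀ x, HasDerivAt w' (F x - w x) x := by
    intro x
    have h1 : HasDerivAt (fun y => -(v 0) * Real.sin y) (-(v 0) * Real.cos x) x :=
      (Real.hasDerivAt_sin x).const_mul (-(v 0))
    have h2 : HasDerivAt (fun y => Real.cos y * A y)
        (-Real.sin x * A x + Real.cos x * (Real.cos x * F x)) x :=
      (Real.hasDerivAt_cos x).mul (hdA x)
    have h3 : HasDerivAt (fun y => Real.sin y * B y)
        (Real.cos x * B x + Real.sin x * (Real.sin x * F x)) x :=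
      (Real.hasDerivAt_sin x).mul (hdB x)
    have h4 := (h1.add h2).add h3
    convert h4 using 1
    · rfl
    · rfl
    · rfl
    have hsc := Real.sin_sq_add_cos_sq x
    simp only [hwdef]
    linear_combination (-(F x)) * hsc
  -- uniqueness: v = w on [0,a]
  set p : ℝ → ℝ := fun x => v x - w x with hpdef
  set p' : ℝ → ℝ := fun x => u' x - w' x with hp'def
  have hdp : ∀ x ∈ Icc (0:ℝ) a, HasDerivWithinAt p (p' x) (Icc 0 a) x :=
    fun x hx => ((hu x hx).sub_const m).sub (hdw x).hasDerivWithinAt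
  have hdp' : ∀ x ∈ Icc (0:ℝ) a, HasDerivWithinAt p' (-p x) (Icc 0 a) x := by
    intro x hx
    have h4 := (hu' x hx).sub (hdw' x).hasDerivWithinAt
    convert h4 using 1
    · rfl
    · rfl
    · rfl
    rw [hpdef]
    simp only
    rw [hFf x hx, hfdef]
    simp only
    ring
  have hE : ∀ x ∈ Icc (0:ℝ) a, p x = 0 ∧ p' x = 0 := by
    have hcontE : ContinuousOn (fun x => p x ^ 2 + p' x ^ 2) (Icc 0 a) := by
      have c1 : ContinuousOn p (Icc 0 a) := fun x hx => (hdp x hx).continuousWithinAt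
      have c2 : ContinuousOn p' (Icc 0 a) := fun x hx => (hdp' x hx).continuousWithinAt
      exact (c1.pow 2).add (c2.pow 2)
    have hder : ∀ x ∈ Ico (0:ℝ) a,
        HasDerivWithinAt (fun x => p x ^ 2 + p' x ^ 2) 0 (Ici x) x := by
      intro x hx
      have hxI : x ∈ Icc (0:ℝ) a := ⟨hx.1, hx.2.le⟩
      have hmem := Stmt0Aux.mem_nhdsWithin_Ici_Icc hx
      have d := (((hdp x hxI).mono_of_mem_nhdsWithin hmem).pow 2).add
        (((hdp' x hxI).mono_of_mem_nhdsWithin hmem).pow 2)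
      convert d using 1
      · rfl
      · rfl
      · rfl
      push_cast
      ring
    have hconst := constant_of_has_deriv_right_zero hcontE hder
    have hA0 : A 0 = 0 := by rw [hAdef]; simp
    have hB0 : B 0 = 0 := by rw [hBdef]; simp
    have hp0 : p 0 = 0 := by
      rw [hpdef]; simp only
      rw [hwdef]; simp [hA0, hB0]
    have hp'0 : p' 0 = 0 := by
      rw [hp'def]; simp only
      rw [hw'def, hb0]; simp [hA0, hB0]
    intro x hx
    have hEx : p x ^ 2 + p' x ^ 2 = p 0 ^ 2 + p' 0 ^ 2 := hconst x hx
    rw [hp0, hp'0] at hEx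
    norm_num at hEx
    constructor
    · have : p x ^ 2 = 0 := by nlinarith [sq_nonneg (p x), sq_nonneg (p' x)]
      exact pow_eq_zero_iff (by norm_num) |>.1 this
    · have : p' x ^ 2 = 0 := by nlinarith [sq_nonneg (p x), sq_nonneg (p' x)]
      exact pow_eq_zero_iff (by norm_num) |>.1 this
  have hveq : ∀ x ∈ Icc (0:ℝ) a, v x = w x := by
    intro x hx
    have := (hE x hx).1
    rw [hpdef] at this; simp only at this; linarith
  have hu'eq : ∀ x ∈ Icc (0:ℝ) a, u' x = w' x := by
    intro x hx
    have := (hE x hx).2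
    rw [hp'def] at this; simp only at this; linarith
  -- boundary condition identity at a
  have haI : a ∈ Icc (0:ℝ) a := ⟨ha.le, le_refl a⟩
  have hBC : -(v 0) * Real.sin a + Real.cos a * A a + Real.sin a * B a = 0 := by
    have := hu'eq a haI
    rw [hba, hw'def] at this
    simp only at this
    linarith
  -- integration by parts
  have hint_pp : IntervalIntegrable (fun x => u' x * u' x + v x * u'' x) volume 0 a := by
    apply ContinuousOn.intervalIntegrable
    rw [hIcc]
    exact (hcu'.mul hcu').add (hcv.mul hu'')
  have hkey : (∫ x in (0:ℝ)..a, (u' x * u' x + v x * u'' x)) = 0 := by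
    have hcont : ContinuousOn (fun x => v x * u' x) (Icc 0 a) := hcv.mul hcu'
    have hderiv : ∀ x ∈ Ioo (0:ℝ) a,
        HasDerivWithinAt (fun x => v x * u' x) (u' x * u' x + v x * u'' x) (Ioi x) x := by
      intro x hx
      have hxI : x ∈ Icc (0:ℝ) a := Ioo_subset_Icc_self hx
      have hnb : Icc (0:ℝ) a ∈ nhds x := Icc_mem_nhds hx.1 hx.2
      have d1 : HasDerivAt v (u' x) x := ((hu x hxI).hasDerivAt hnb).sub_const m
      have d2 : HasDerivAt u' (u'' x) x := (hu' x hxI).hasDerivAt hnb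
      exact (d1.mul d2).hasDerivWithinAt
    have h5 := integral_eq_sub_of_hasDeriv_right_of_le ha.le hcont hderiv hint_pp
    rw [h5]
    simp [hba, hb0]
  -- rewrite LHS as -∫ v f
  have hL : (∫ x in (0:ℝ)..a, ((u' x)^2 - (u x - m)^2)) =
      -∫ x in (0:ℝ)..a, v x * f x := by
    have i1 : IntervalIntegrable (fun x => (u' x)^2 - (u x - m)^2) volume 0 a := by
      apply ContinuousOn.intervalIntegrable
      rw [hIcc]
      exact (hcu'.pow 2).sub ((hcu.sub continuousOn_const).pow 2)
    have h6 : (∫ x in (0:ℝ)..a, ((u' x)^2 - (u x - m)^2)) -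
        (∫ x in (0:ℝ)..a, (u' x * u' x + v x * u'' x)) =
        ∫ x in (0:ℝ)..a, -(v x * f x) := by
      rw [← integral_sub i1 hint_pp]
      apply integral_congr
      intro x _
      simp only [hfdef, hvdef]
      ring
    rw [hkey, sub_zero] at h6
    rw [h6, intervalIntegral.integral_neg]
  -- expansion of ∫ v f
  have hcA' : ContinuousOn (fun x => (Real.sin x * A x - Real.cos x * B x) * f x) (Icc 0 a) :=
    (((Real.continuous_sin.mul hcA).sub (Real.continuous_cos.mul hcB)).continuousOn).mul hcf
  have hccf : ContinuousOn (fun x => Real.cos x * f x) (Icc 0 a) :=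
    Real.continuous_cos.continuousOn.mul hcf
  have hvf : (∫ x in (0:ℝ)..a, v x * f x) =
      v 0 * (∫ x in (0:ℝ)..a, Real.cos x * f x) +
      ∫ x in (0:ℝ)..a, (Real.sin x * A x - Real.cos x * B x) * f x := by
    have e1 : (∫ x in (0:ℝ)..a, v x * f x) = ∫ x in (0:ℝ)..a,
        (v 0 * (Real.cos x * f x) + (Real.sin x * A x - Real.cos x * B x) * f x) := by
      apply integral_congr
      intro x hx
      rw [hIcc] at hx
      show v x * f x = _
      rw [hveq x hx]
      simp only [hwdef]
      ring
    rw [e1, intervalIntegral.integral_add, intervalIntegral.integral_const_mul]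
    · exact ContinuousOn.intervalIntegrable (by rw [hIcc]; exact continuousOn_const.mul hccf)
    · exact ContinuousOn.intervalIntegrable (by rw [hIcc]; exact hcA')
  -- abs and integral bounds
  set I : ℝ := ∫ x in (0:ℝ)..a, |f x| with hIdef
  set J : ℝ := ∫ x in (0:ℝ)..a, f x ^ 2 with hJdef
  have hfabsint : IntervalIntegrable (fun x => |f x|) volume 0 a :=
    ContinuousOn.intervalIntegrable (by rw [hIcc]; exact hcf.abs)
  have hI0 : 0 ≤ I := integral_nonneg ha.le fun x _ => abs_nonneg _
  have hJ0 : 0 ≤ J := integral_nonneg ha.le fun x _ => sq_nonneg _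
  have hJint : IntervalIntegrable (fun x => f x ^ 2) volume 0 a :=
    ContinuousOn.intervalIntegrable (by rw [hIcc]; exact hcf.pow 2)
  have hFint : ∀ c d : ℝ, IntervalIntegrable (fun t => |F t|) volume c d :=
    fun c d => (hF.abs).intervalIntegrable c d
  have hFabs : (∫ t in (0:ℝ)..a, |F t|) = I := by
    rw [hIdef]
    apply integral_congr
    intro t ht
    rw [hIcc] at ht
    simp only
    rw [hFf t ht]
  have htrig : ∀ g : ℝ → ℝ, (∀ t, |g t| ≤ 1) → Continuous (fun t => g t * F t) →
      ∀ x ∈ Icc (0:ℝ) a, |∫ t in (0:ℝ)..x, g t * F t| ≤ I := by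
    intro g hg hgc x hx
    have h1 : |∫ t in (0:ℝ)..x, g t * F t| ≤ ∫ t in (0:ℝ)..x, |g t * F t| :=
      intervalIntegral.abs_integral_le_integral_abs hx.1
    have h2 : (∫ t in (0:ℝ)..x, |g t * F t|) ≤ ∫ t in (0:ℝ)..x, |F t| := by
      apply integral_mono_on hx.1 (hgc.abs.intervalIntegrable _ _) (hFint _ _)
      intro t _
      rw [abs_mul]
      exact mul_le_of_le_one_left (abs_nonneg _) (hg t)
    have h3 : (∫ t in (0:ℝ)..x, |F t|) ≤ ∫ t in (0:ℝ)..a, |F t| := by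
      have h4 := integral_add_adjacent_intervals (hFint 0 x) (hFint x a)
      have h5 : (0:ℝ) ≤ ∫ t in x..a, |F t| := integral_nonneg hx.2 fun t _ => abs_nonneg _
      linarith
    rw [hFabs] at h3
    linarith
  have hbndA : ∀ x ∈ Icc (0:ℝ) a, |A x| ≤ I := by
    intro x hx
    rw [hAdef]
    exact htrig Real.cos (fun t => Real.abs_cos_le_one t) hcosF x hx
  have hbndB : ∀ x ∈ Icc (0:ℝ) a, |B x| ≤ I := by
    intro x hx
    rw [hBdef]
    exact htrig Real.sin (fun t => Real.abs_sin_le_one t) hsinF x hx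
  have hAa : A a = ∫ x in (0:ℝ)..a, Real.cos x * f x := by
    rw [hAdef]
    apply integral_congr
    intro t ht
    rw [hIcc] at ht
    simp only
    rw [hFf t ht]
  have hXa : |∫ x in (0:ℝ)..a, Real.cos x * f x| ≤ I := by
    rw [← hAa]; exact hbndA a haI
  -- kernel bound
  have hkernel : |∫ x in (0:ℝ)..a, (Real.sin x * A x - Real.cos x * B x) * f x|
      ≤ 2 * I * I := by
    have h1 : |∫ x in (0:ℝ)..a, (Real.sin x * A x - Real.cos x * B x) * f x|
        ≤ ∫ x in (0:ℝ)..a, |(Real.sin x * A x - Real.cos x * B x) * f x| :=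
      intervalIntegral.abs_integral_le_integral_abs ha.le
    have h2 : (∫ x in (0:ℝ)..a, |(Real.sin x * A x - Real.cos x * B x) * f x|)
        ≤ ∫ x in (0:ℝ)..a, 2 * I * |f x| := by
      apply integral_mono_on ha.le
        (ContinuousOn.intervalIntegrable (by rw [hIcc]; exact hcA'.abs))
        (hfabsint.const_mul _)
      intro x hx
      rw [abs_mul]
      have hA' := hbndA x hx
      have hB' := hbndB x hx
      have hbd : |Real.sin x * A x - Real.cos x * B x| ≤ 2 * I := by
        have t1 : |Real.sin x * A x - Real.cos x * B x|
            ≤ |Real.sin x * A x| + |Real.cos x * B x| := abs_sub _ _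
        rw [abs_mul, abs_mul] at t1
        nlinarith [Real.abs_sin_le_one x, Real.abs_cos_le_one x, abs_nonneg (A x),
          abs_nonneg (B x), abs_nonneg (Real.sin x), abs_nonneg (Real.cos x)]
      exact mul_le_mul_of_nonneg_right hbd (abs_nonneg _)
    have h3 : (∫ x in (0:ℝ)..a, 2 * I * |f x|) = 2 * I * I := by
      rw [intervalIntegral.integral_const_mul, ← hIdef]
    linarith
  -- Cauchy-Schwarz : I^2 ≤ a * J
  have hCS : I^2 ≤ a * J := by
    have h0 : (0:ℝ) ≤ ∫ x in (0:ℝ)..a, (|f x| - I/a)^2 :=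
      integral_nonneg ha.le fun x _ => sq_nonneg _
    have hexp : (∫ x in (0:ℝ)..a, (|f x| - I/a)^2)
        = (J - 2*(I/a)*I) + (a - 0) * (I/a)^2 := by
      have e : (fun x => (|f x| - I/a)^2)
          = fun x => (f x ^ 2 - 2*(I/a) * |f x|) + (I/a)^2 := by
        funext x
        rw [sub_sq, sq_abs]
        ring
      rw [e, intervalIntegral.integral_add (hJint.sub (hfabsint.const_mul _))
        intervalIntegrable_const]
      rw [intervalIntegral.integral_sub hJint (hfabsint.const_mul _),
        intervalIntegral.integral_const_mul, intervalIntegral.integral_const]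
      rw [← hIdef, ← hJdef]
      simp [smul_eq_mul]
    rw [hexp] at h0
    have hane : a ≠ 0 := ha.ne'
    have h9 : 0 ≤ (a * J - I^2) / a := by
      have : (J - 2*(I/a)*I) + (a - 0) * (I/a)^2 = (a * J - I^2) / a := by
        field_simp
        ring
      rw [this] at h0
      exact h0
    have h10 := mul_le_mul_of_nonneg_right h9 ha.le
    rw [zero_mul, div_mul_cancel₀ _ hane] at h10
    linarith
  -- final assembly
  have hRJ : (∫ x in (0:ℝ)..a, (u'' x + u x - m)^2) = J := by
    rw [hJdef]
    apply integral_congr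
    intro x _
    simp only [hfdef, hvdef]
    ring
  rw [hL, hvf, hRJ]
  have hterm1 : -(v 0 * (∫ x in (0:ℝ)..a, Real.cos x * f x)) ≤ 2*a/s * J := by
    by_cases hsa : Real.sin a = 0
    · have hcosne : Real.cos a ≠ 0 := by
        have hsc := Real.sin_sq_add_cos_sq a
        intro hc; rw [hsa, hc] at hsc; norm_num at hsc
      have hAa0 : A a = 0 := by
        have h7 := hBC
        rw [hsa] at h7
        have h8 : Real.cos a * A a = 0 := by linarith [h7]
        rcases mul_eq_zero.1 h8 with h | h
        · exact absurd h hcosne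
        · exact h
      rw [← hAa, hAa0, mul_zero, neg_zero]
      have : (0:ℝ) ≤ 2*a/s := by positivity
      exact mul_nonneg this hJ0
    · have hs' : s = |Real.sin a| := by rw [hsdef, if_neg hsa]
      have hsa' : 0 < |Real.sin a| := abs_pos.2 hsa
      have hv0 : |v 0| * |Real.sin a| ≤ 2 * I := by
        have h8 : v 0 * Real.sin a = Real.cos a * A a + Real.sin a * B a := by
          linarith [hBC]
        calc |v 0| * |Real.sin a| = |v 0 * Real.sin a| := (abs_mul _ _).symm
          _ = |Real.cos a * A a + Real.sin a * B a| := by rw [h8]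
          _ ≤ |Real.cos a * A a| + |Real.sin a * B a| := abs_add_le _ _
          _ ≤ 2 * I := by
              rw [abs_mul, abs_mul]
              nlinarith [hbndA a haI, hbndB a haI, Real.abs_cos_le_one a,
                Real.abs_sin_le_one a, abs_nonneg (A a), abs_nonneg (B a),
                abs_nonneg (Real.cos a), abs_nonneg (Real.sin a)]
      have hv0' : |v 0| ≤ 2 * I / s := by
        rw [hs', le_div_iff₀ hsa']
        linarith
      calc -(v 0 * (∫ x in (0:ℝ)..a, Real.cos x * f x))
          ≤ |v 0 * (∫ x in (0:ℝ)..a, Real.cos x * f x)| := neg_le_abs _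
        _ = |v 0| * |∫ x in (0:ℝ)..a, Real.cos x * f x| := abs_mul _ _
        _ ≤ (2 * I / s) * I := mul_le_mul hv0' hXa (abs_nonneg _) (by positivity)
        _ = (2 * I^2) / s := by ring
        _ ≤ (2 * (a * J)) / s := by gcongr
        _ = 2*a/s * J := by ring
  have hterm2 : -(∫ x in (0:ℝ)..a, (Real.sin x * A x - Real.cos x * B x) * f x)
      ≤ 2 * a * J := by
    have := neg_le_abs (∫ x in (0:ℝ)..a, (Real.sin x * A x - Real.cos x * B x) * f x)
    nlinarith [hkernel, hCS]
  nlinarith [hterm1, hterm2, hJ0]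
end

section
/- Let w : [y₁, y₂] → ℝ be a C² solution of w'' + w − 1 = 0 with w(y₁) = w(y₂) = 0 and w > 0 on (y₁, y₂). Let M = max_{[y₁,y₂]} w, attained at y₀ ∈ (y₁,y₂). Then w(x) = (M−1)cos(x−y₀) + 1 for all x ∈ [y₁,y₂], the interval is symmetric about y₀ (i.e., y₂ − y₀ = y₀ − y₁), M ≥ 2, and π/2 < y₂ − y₀ ≤ π. -/
open Real Set

/-- Structure of a positive arch of w'' + w − 1 = 0 vanishing at both endpoints:
w(x) = (M−1)cos(x−y₀)+1, the interval is symmetric about the maximum point y₀,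
M ≥ 2 and π/2 < y₂ − y₀ ≤ π. -/
theorem stmt12 (y₁ y₂ y₀ M : ℝ) (h12 : y₁ < y₂) (hy₀ : y₀ ∈ Ioo y₁ y₂)
    (w w' : ℝ → ℝ)
    (hw : ∀ x ∈ Icc y₁ y₂, HasDerivWithinAt w (w' x) (Icc y₁ y₂) x)
    (hw' : ∀ x ∈ Icc y₁ y₂, HasDerivWithinAt w' (1 - w x) (Icc y₁ y₂) x)
    (hb1 : w y₁ = 0) (hb2 : w y₂ = 0)
    (hpos : ∀ x ∈ Ioo y₁ y₂, 0 < w x)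
    (hmax : IsMaxOn w (Icc y₁ y₂) y₀) (hM : M = w y₀) :
    (∀ x ∈ Icc y₁ y₂, w x = (M - 1) * Real.cos (x - y₀) + 1) ∧
    y₂ - y₀ = y₀ - y₁ ∧ 2 ≤ M ∧ π/2 < y₂ - y₀ ∧ y₂ - y₀ ≤ π := by
  obtain ⟨hy₀1, hy₀2⟩ := hy₀
  have hy₀m : y₀ ∈ Icc y₁ y₂ := ⟨le_of_lt hy₀1, le_of_lt hy₀2⟩
  have hnhds : Icc y₁ y₂ ∈ nhds y₀ := Icc_mem_nhds hy₀1 hy₀2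
  have hd0 : HasDerivAt w (w' y₀) y₀ := (hw y₀ hy₀m).hasDerivAt hnhds
  have hw'0 : w' y₀ = 0 :=
    (hmax.isLocalMax hnhds).hasDerivAt_eq_zero hd0
  set c := M - 1 with hc
  set u : ℝ → ℝ := fun x => w x - (c * Real.cos (x - y₀) + 1) with hu_def
  set v : ℝ → ℝ := fun x => w' x + c * Real.sin (x - y₀) with hv_def
  set E : ℝ → ℝ := fun x => u x ^ 2 + v x ^ 2 with hE_def
  have hu : ∀ x ∈ Icc y₁ y₂, HasDerivWithinAt u (v x) (Icc y₁ y₂) x := by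
    intro x hx
    have h1 : HasDerivWithinAt (fun x => Real.cos (x - y₀)) (-Real.sin (x - y₀)) (Icc y₁ y₂) x := by
      have := ((Real.hasDerivAt_cos (x - y₀)).comp x ((hasDerivAt_id x).sub_const y₀))
      simpa [Function.comp_def] using this.hasDerivWithinAt
    have := (hw x hx).sub (((h1.const_mul c)).add_const 1)
    convert this using 1
    iterate 3 rfl
    simp only [hv_def]; ring
  have hv : ∀ x ∈ Icc y₁ y₂, HasDerivWithinAt v (-(u x)) (Icc y₁ y₂) x := by
    intro x hx
    have h1 : HasDerivWithinAt (fun x => Real.sin (x - y₀)) (Real.cos (x - y₀)) (Icc y₁ y₂) x := by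
      have := ((Real.hasDerivAt_sin (x - y₀)).comp x ((hasDerivAt_id x).sub_const y₀))
      simpa [Function.comp_def] using this.hasDerivWithinAt
    have := (hw' x hx).add (h1.const_mul c)
    convert this using 1
    iterate 3 rfl
    simp only [hu_def]; ring
  have hE : ∀ x ∈ Icc y₁ y₂, HasDerivWithinAt E 0 (Icc y₁ y₂) x := by
    intro x hx
    have := (((hu x hx).pow 2)).add ((hv x hx).pow 2)
    convert this using 1
    iterate 3 rfl
    push_cast
    ring
  have hconst : ∀ x ∈ Icc y₁ y₂, E x = E y₁ := by
    apply constant_of_has_deriv_right_zero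
    · intro x hx
      exact (hE x hx).continuousWithinAt
    · intro x hx
      have hmem : Icc y₁ y₂ ∈ nhdsWithin x (Ici x) := by
        apply mem_nhdsWithin.2
        exact ⟨Iio y₂, isOpen_Iio, hx.2, fun z hz => ⟨hx.1.trans hz.2, le_of_lt hz.1⟩⟩
      exact (hE x ⟨hx.1, le_of_lt hx.2⟩).mono_of_mem_nhdsWithin hmem
  have hE0 : E y₀ = 0 := by
    simp [hE_def, hu_def, hv_def, hw'0, ← hM, hc]
  have hEzero : ∀ x ∈ Icc y₁ y₂, E x = 0 := by
    intro x hx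
    rw [hconst x hx, ← hconst y₀ hy₀m, hE0]
  have heq : ∀ x ∈ Icc y₁ y₂, w x = c * Real.cos (x - y₀) + 1 := by
    intro x hx
    have h := hEzero x hx
    simp only [hE_def] at h
    have h2 : u x ^ 2 = 0 := by nlinarith [sq_nonneg (u x), sq_nonneg (v x)]
    have h1 : u x = 0 := by
      have := sq_nonneg (u x)
      nlinarith [sq_abs (u x), abs_nonneg (u x)]
    have := h1
    simp only [hu_def] at this
    linarith
  have hMpos : 0 < M := hM ▸ hpos y₀ ⟨hy₀1, hy₀2⟩
  -- endpoint equations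
  have hA : c * Real.cos (y₀ - y₁) = -1 := by
    have := heq y₁ ⟨le_refl _, le_of_lt h12⟩
    rw [hb1] at this
    have hcos : Real.cos (y₁ - y₀) = Real.cos (y₀ - y₁) := by
      rw [show y₁ - y₀ = -(y₀ - y₁) by ring, Real.cos_neg]
    rw [hcos] at this; linarith
  have hB : c * Real.cos (y₂ - y₀) = -1 := by
    have := heq y₂ ⟨le_of_lt h12, le_refl _⟩
    rw [hb2] at this; linarith
  have hca1 := Real.neg_one_le_cos (y₀ - y₁)
  have hca2 := Real.cos_le_one (y₀ - y₁)
  have hcb1 := Real.neg_one_le_cos (y₂ - y₀)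
  have hcb2 := Real.cos_le_one (y₂ - y₀)
  have hcge : 1 ≤ c := by
    rcases lt_trichotomy c 0 with h | h | h
    · nlinarith
    · rw [h] at hA; norm_num at hA
    · nlinarith
  have hMge : 2 ≤ M := by simp [hc] at hcge; linarith
  -- y₂ - y₀ ≤ π
  have hble : y₂ - y₀ ≤ π := by
    by_contra h
    push_neg at h
    have hmem : y₀ + π ∈ Ioo y₁ y₂ := ⟨by nlinarith [Real.pi_pos], by linarith⟩
    have hp := hpos _ hmem
    have := heq (y₀ + π) ⟨le_of_lt hmem.1, le_of_lt hmem.2⟩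
    rw [show y₀ + π - y₀ = π by ring, Real.cos_pi] at this
    nlinarith
  have hale : y₀ - y₁ ≤ π := by
    by_contra h
    push_neg at h
    have hmem : y₀ - π ∈ Ioo y₁ y₂ := ⟨by linarith, by nlinarith [Real.pi_pos]⟩
    have hp := hpos _ hmem
    have := heq (y₀ - π) ⟨le_of_lt hmem.1, le_of_lt hmem.2⟩
    rw [show y₀ - π - y₀ = -π by ring, Real.cos_neg, Real.cos_pi] at this
    nlinarith
  -- y₂ - y₀ > π/2
  have hbgt : π/2 < y₂ - y₀ := by
    by_contra h
    push_neg at h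
    have hcosnn : 0 ≤ Real.cos (y₂ - y₀) :=
      Real.cos_nonneg_of_mem_Icc ⟨by linarith [Real.pi_pos], h⟩
    nlinarith
  -- symmetry
  have hcoseq : Real.cos (y₀ - y₁) = Real.cos (y₂ - y₀) := by
    have hc0 : c ≠ 0 := by linarith
    apply mul_left_cancel₀ hc0
    nlinarith
  have hsym : y₂ - y₀ = y₀ - y₁ := by
    have := Real.injOn_cos (show y₀ - y₁ ∈ Icc 0 π from ⟨by linarith, hale⟩)
      (show y₂ - y₀ ∈ Icc 0 π from ⟨by linarith, hble⟩) hcoseq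
    linarith
  exact ⟨heq, hsym, hMge, hbgt, hble⟩
end

section
/- Let a > 0, let w ∈ C²([0,a]), and let u, v : [0,a] → ℝ with v = u − w, where w satisfies w'' + w − w̄ = 0 on (0,a) with w'(0) = w'(a) = 0 (w̄ being the mean of w), and u ∈ H¹((0,a)). Then ∫₀ᵃ [v_x² − (v − v̄)²] dx = ∫₀ᵃ [u_x² − (u − ū)²] dx, where v̄, ū are the means of v, u. -/
open Real Set MeasureTheory

/-- Energy invariance: if w is a steady state (w'' + w − w̄ = 0 with Neumann boundary
conditions) and u ∈ H¹ (here C¹), then E[u − w] = E[u]. -/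
theorem stmt17 (a : ℝ) (ha : 0 < a) (u u' w w' : ℝ → ℝ)
    (hu : ∀ x ∈ Icc (0:ℝ) a, HasDerivWithinAt u (u' x) (Icc 0 a) x)
    (hu'c : ContinuousOn u' (Icc 0 a))
    (hw : ∀ x ∈ Icc (0:ℝ) a, HasDerivWithinAt w (w' x) (Icc 0 a) x)
    (hw' : ∀ x ∈ Icc (0:ℝ) a,
      HasDerivWithinAt w' ((1/a) * (∫ y in (0:ℝ)..a, w y) - w x) (Icc 0 a) x)
    (hb0 : w' 0 = 0) (hba : w' a = 0) :
    (∫ x in (0:ℝ)..a,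
        ((u' x - w' x)^2 - ((u x - w x) - (1/a) * ∫ y in (0:ℝ)..a, (u y - w y))^2))
      = ∫ x in (0:ℝ)..a, ((u' x)^2 - (u x - (1/a) * ∫ y in (0:ℝ)..a, u y)^2) := by
  have h0a : (0:ℝ) ≤ a := ha.le
  have huIcc : uIcc (0:ℝ) a = Icc 0 a := uIcc_of_le h0a
  set wbar : ℝ := (1/a) * (∫ y in (0:ℝ)..a, w y) with hwbar
  set ubar : ℝ := (1/a) * (∫ y in (0:ℝ)..a, u y) with hubar
  -- continuity
  have huc : ContinuousOn u (Icc 0 a) := fun x hx => (hu x hx).continuousWithinAt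
  have hwc : ContinuousOn w (Icc 0 a) := fun x hx => (hw x hx).continuousWithinAt
  have hw'c : ContinuousOn w' (Icc 0 a) := fun x hx => (hw' x hx).continuousWithinAt
  -- integrability helper
  have hInt : ∀ f : ℝ → ℝ, ContinuousOn f (Icc 0 a) →
      IntervalIntegrable f volume 0 a := by
    intro f hf
    exact (huIcc ▸ hf : ContinuousOn f (uIcc 0 a)).intervalIntegrable
  have hui := hInt u huc
  have hwi := hInt w hwc
  -- mean of (w - wbar) is zero
  have hwzero : ∫ x in (0:ℝ)..a, (w x - wbar) = 0 := by
    rw [intervalIntegral.integral_sub hwi intervalIntegrable_const,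
      intervalIntegral.integral_const]
    rw [hwbar]; field_simp
    rw [smul_eq_mul, sub_zero, mul_div_cancel₀ _ ha.ne', sub_self]
  -- integration by parts: ∫ f' w' = ∫ f (w - wbar)
  have key : ∀ (f f' : ℝ → ℝ),
      (∀ x ∈ Icc (0:ℝ) a, HasDerivWithinAt f (f' x) (Icc 0 a) x) →
      ContinuousOn f' (Icc 0 a) →
      (∫ x in (0:ℝ)..a, f' x * w' x) = ∫ x in (0:ℝ)..a, f x * (w x - wbar) := by
    intro f f' hf hf'c
    have hfc : ContinuousOn f (Icc 0 a) := fun x hx => (hf x hx).continuousWithinAt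
    have hparts := intervalIntegral.integral_deriv_mul_eq_sub_of_hasDerivWithinAt
      (u := f) (v := w') (u' := f') (v' := fun x => wbar - w x) (a := (0:ℝ)) (b := a)
      (fun x hx => by rw [huIcc] at hx ⊢; exact hf x hx)
      (fun x hx => by rw [huIcc] at hx ⊢; exact hw' x hx)
      (hInt f' hf'c)
      (hInt _ ((continuousOn_const.sub hwc)))
    rw [hb0, hba] at hparts
    simp only [mul_zero, sub_zero] at hparts
    have hsplit : (∫ x in (0:ℝ)..a, (f' x * w' x + f x * (wbar - w x)))
        = (∫ x in (0:ℝ)..a, f' x * w' x) + ∫ x in (0:ℝ)..a, f x * (wbar - w x) :=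
      intervalIntegral.integral_add (hInt _ (hf'c.mul hw'c))
        (hInt _ (hfc.mul (continuousOn_const.sub hwc)))
    rw [hsplit] at hparts
    have : (∫ x in (0:ℝ)..a, f x * (wbar - w x))
        = - ∫ x in (0:ℝ)..a, f x * (w x - wbar) := by
      rw [← intervalIntegral.integral_neg]
      congr 1; funext x; ring
    rw [this] at hparts
    linarith
  -- cross term: ∫ (f - fbar)(w - wbar) = ∫ f (w - wbar)
  have cross : ∀ (f : ℝ → ℝ) (c : ℝ), ContinuousOn f (Icc 0 a) →
      (∫ x in (0:ℝ)..a, (f x - c) * (w x - wbar)) = ∫ x in (0:ℝ)..a, f x * (w x - wbar) := by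
    intro f c hfc
    have h1 : (∫ x in (0:ℝ)..a, (f x - c) * (w x - wbar))
        = (∫ x in (0:ℝ)..a, f x * (w x - wbar)) - c * ∫ x in (0:ℝ)..a, (w x - wbar) := by
      rw [← intervalIntegral.integral_const_mul,
        ← intervalIntegral.integral_sub (f := fun x => f x * (w x - wbar))
          (g := fun x => c * (w x - wbar)) (hInt _ (hfc.mul (hwc.sub continuousOn_const)))
          (hInt _ ((continuousOn_const.mul (hwc.sub continuousOn_const))))]
      congr 1; funext x; ring
    rw [h1, hwzero]; ring
  have keyu : (∫ x in (0:ℝ)..a, u' x * w' x)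
      = ∫ x in (0:ℝ)..a, (u x - ubar) * (w x - wbar) := by
    rw [key u u' hu hu'c, cross u ubar huc]
  have keyw : (∫ x in (0:ℝ)..a, w' x * w' x)
      = ∫ x in (0:ℝ)..a, (w x - wbar) * (w x - wbar) := by
    rw [key w w' hw hw'c, cross w wbar hwc]
  -- mean of v = ubar - wbar
  have hvbar : (1/a) * (∫ y in (0:ℝ)..a, (u y - w y)) = ubar - wbar := by
    rw [intervalIntegral.integral_sub hui hwi, hubar, hwbar]; ring
  -- integrability of the pieces
  have hi2 : IntervalIntegrable (fun x => u' x * w' x) volume 0 a := hInt _ (hu'c.mul hw'c)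
  have hi3 : IntervalIntegrable (fun x => (u x - ubar) * (w x - wbar)) volume 0 a :=
    hInt _ ((huc.sub continuousOn_const).mul (hwc.sub continuousOn_const))
  have hi4 : IntervalIntegrable (fun x => w' x * w' x) volume 0 a := hInt _ (hw'c.mul hw'c)
  have hi5 : IntervalIntegrable (fun x => (w x - wbar) * (w x - wbar)) volume 0 a :=
    hInt _ ((hwc.sub continuousOn_const).mul (hwc.sub continuousOn_const))
  have hA : IntervalIntegrable (fun x => (u' x)^2 - (u x - ubar)^2) volume 0 a :=
    hInt _ ((hu'c.pow 2).sub ((huc.sub continuousOn_const).pow 2))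
  have hB : IntervalIntegrable (fun x => (-2:ℝ) * (u' x * w' x - (u x - ubar) * (w x - wbar))
      + (w' x * w' x - (w x - wbar) * (w x - wbar))) volume 0 a :=
    ((hi2.sub hi3).const_mul (-2)).add (hi4.sub hi5)
  have hB0 : (∫ x in (0:ℝ)..a, ((-2:ℝ) * (u' x * w' x - (u x - ubar) * (w x - wbar))
      + (w' x * w' x - (w x - wbar) * (w x - wbar)))) = 0 := by
    rw [intervalIntegral.integral_add ((hi2.sub hi3).const_mul (-2)) (hi4.sub hi5),
      intervalIntegral.integral_const_mul,
      intervalIntegral.integral_sub hi2 hi3, intervalIntegral.integral_sub hi4 hi5,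
      keyu, keyw]
    ring
  calc (∫ x in (0:ℝ)..a,
        ((u' x - w' x)^2 - ((u x - w x) - (1/a) * ∫ y in (0:ℝ)..a, (u y - w y))^2))
      = ∫ x in (0:ℝ)..a, (((u' x)^2 - (u x - ubar)^2)
          + ((-2:ℝ) * (u' x * w' x - (u x - ubar) * (w x - wbar))
            + (w' x * w' x - (w x - wbar) * (w x - wbar)))) := by
        rw [hvbar]; congr 1; funext x; ring
    _ = (∫ x in (0:ℝ)..a, ((u' x)^2 - (u x - ubar)^2))
          + ∫ x in (0:ℝ)..a, ((-2:ℝ) * (u' x * w' x - (u x - ubar) * (w x - wbar))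
            + (w' x * w' x - (w x - wbar) * (w x - wbar))) :=
        intervalIntegral.integral_add hA hB
    _ = ∫ x in (0:ℝ)..a, ((u' x)^2 - (u x - ubar)^2) := by rw [hB0, add_zero]
end
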